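/- Let S be an admissible additive subsemigroup of ℤ^n × ℤ. Then the Okounkov convex set Δ(S) equals the closure in ℝ^n of the union ⋃_{k≥1} S^k. -/
import Mathlib


open Set

noncomputable section

/-- The embedding of the lattice `ℤ^n × ℤ` into `ℝ^n × ℝ`. -/
def latticeEmbed {n : ℕ} (x : (Fin n → ℤ) × ℤ) : (Fin n → ℝ) × ℝ :=
  (fun i => (x.1 i : ℝ), (x.2 : ℝ))

/-- The set of all finite nonnegative linear combinations of elements of `T`. -/
def coneCombos {E : Type*} [AddCommMonoid E] [Module ℝ E] (T : Set E) : Set E :=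
  {x | ∃ (k : ℕ) (c : Fin k → ℝ) (t : Fin k → E),
    (∀ i, 0 ≤ c i) ∧ (∀ i, t i ∈ T) ∧ x = ∑ i, c i • t i}

/-- `C(T)`: the closed convex cone generated by `T`. -/
def closedConeHull {E : Type*} [AddCommMonoid E] [Module ℝ E] [TopologicalSpace E]
    (T : Set E) : Set E :=
  closure (coneCombos T)

/-- The closed convex cone `C(S) ⊆ ℝ^{n+1}` generated by a subset `S ⊆ ℤ^n × ℤ`. -/
def coneOf {n : ℕ} (S : Set ((Fin n → ℤ) × ℤ)) : Set ((Fin n → ℝ) × ℝ) :=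
  closedConeHull (latticeEmbed '' S)

/-- The Okounkov convex set `Δ(S) = π(C(S) ∩ (ℝ^n × {1}))`. -/
def okounkovSet {n : ℕ} (S : Set ((Fin n → ℤ) × ℤ)) : Set (Fin n → ℝ) :=
  Prod.fst '' (coneOf S ∩ {x | x.2 = 1})

/-- `S^k = {α ∈ ℝ^n : kα ∈ ℤ^n and (kα, k) ∈ S}`. -/
def Spow {n : ℕ} (S : Set ((Fin n → ℤ) × ℤ)) (k : ℕ) : Set (Fin n → ℝ) :=
  {α | ∃ β : Fin n → ℤ, (∀ i, (β i : ℝ) = (k : ℝ) * α i) ∧ (β, (k : ℤ)) ∈ S}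

section aux
variable {M : Type*} [AddCommMonoid M]

lemma aux_nsmul_mem {S : Set M} (hsemi : ∀ a ∈ S, ∀ b ∈ S, a + b ∈ S)
    {a : M} (ha : a ∈ S) : ∀ m : ℕ, 0 < m → m • a ∈ S := by
  intro m hm
  induction m with
  | zero => omega
  | succ k ih =>
    rcases Nat.eq_zero_or_pos k with hk | hk
    · subst hk; simpa using ha
    · rw [succ_nsmul]
      exact hsemi _ (ih hk) _ ha

lemma aux_sum_mem {S : Set M} (hsemi : ∀ a ∈ S, ∀ b ∈ S, a + b ∈ S) :
    ∀ (k : ℕ) (s : Fin k → M) (p : Fin k → ℕ), (∀ i, s i ∈ S) →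
      0 < ∑ i, p i → (∑ i, p i • s i) ∈ S := by
  intro k
  induction k with
  | zero => intro s p _ hp; simp at hp
  | succ k ih =>
    intro s p hs hp
    rw [Fin.sum_univ_succ] at hp ⊢
    rcases Nat.eq_zero_or_pos (∑ i : Fin k, p i.succ) with h0 | h0
    · have hall : ∀ i : Fin k, p i.succ = 0 := by
        intro i
        exact (Finset.sum_eq_zero_iff.mp h0) i (Finset.mem_univ i)
      have htail : (∑ i : Fin k, p i.succ • s i.succ) = 0 :=
        Finset.sum_eq_zero (fun i _ => by rw [hall i, zero_smul])
      rw [htail, add_zero]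
      exact aux_nsmul_mem hsemi (hs 0) _ (by omega)
    · have htail := ih (fun i => s i.succ) (fun i => p i.succ) (fun i => hs i.succ) h0
      rcases Nat.eq_zero_or_pos (p 0) with hp0 | hp0
      · rw [hp0, zero_smul, zero_add]; exact htail
      · exact hsemi _ (aux_nsmul_mem hsemi (hs 0) _ hp0) _ htail

lemma aux_abs_sum {k : ℕ} (a b v : Fin k → ℝ) (r : ℝ)
    (h : ∀ i, |a i - b i| ≤ r) :
    |∑ i, a i * v i - ∑ i, b i * v i| ≤ r * ∑ i, |v i| := by
  rw [← Finset.sum_sub_distrib]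
  calc |∑ i, (a i * v i - b i * v i)| ≤ ∑ i, |a i * v i - b i * v i| :=
        Finset.abs_sum_le_sum_abs _ _
    _ ≤ ∑ i, r * |v i| := by
        apply Finset.sum_le_sum
        intro i _
        rw [← sub_mul, abs_mul]
        exact mul_le_mul_of_nonneg_right (h i) (abs_nonneg _)
    _ = r * ∑ i, |v i| := by rw [Finset.mul_sum]

end aux

set_option maxHeartbeats 1200000 in
/-- For an admissible additive subsemigroup `S ⊆ ℤ^n × ℤ`, the Okounkov
convex set `Δ(S)` equals the closure of `⋃_{k ≥ 1} S^k`. -/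
theorem okounkovSet_eq_closure_iUnion_Spow (n : ℕ) (hn : 1 ≤ n)
    (S : Set ((Fin n → ℤ) × ℤ))
    (hsemi : ∀ a ∈ S, ∀ b ∈ S, a + b ∈ S)
    (hadm : ∀ a ∈ S, 0 ≤ a.2) :
    okounkovSet S = closure (⋃ k : ℕ, ⋃ (_ : 1 ≤ k), Spow S k) := by
  have hok : okounkovSet S = {α | ((α, (1:ℝ)) : (Fin n → ℝ) × ℝ) ∈ coneOf S} := by
    ext α
    constructor
    · rintro ⟨x, ⟨hx1, hx2⟩, rfl⟩
      have hx : x = (x.1, (1:ℝ)) := by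
        rw [← hx2]
      rw [mem_setOf_eq, ← hx]
      exact hx1
    · intro h
      exact ⟨(α, 1), ⟨h, rfl⟩, rfl⟩
  have hclosed : IsClosed (okounkovSet S) := by
    rw [hok]
    exact isClosed_closure.preimage (Continuous.prodMk continuous_id continuous_const)
  apply Subset.antisymm
  · -- hard direction
    intro α hα
    rw [hok, mem_setOf_eq] at hα
    rw [Metric.mem_closure_iff]
    intro ε hε
    set A : ℝ := ‖α‖ with hA
    have hApos : 0 ≤ A := norm_nonneg α
    set δ : ℝ := min (8⁻¹:ℝ) (ε / (3*A+5)) with hδdef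
    have hδpos : 0 < δ := lt_min (by norm_num) (by positivity)
    have hδ8 : δ ≤ 8⁻¹ := min_le_left _ _
    have hδε : δ * (3*A+5) ≤ ε := by
      have h5 : (0:ℝ) < 3*A+5 := by linarith
      have hm := min_le_right (8⁻¹:ℝ) (ε / (3*A+5))
      calc δ * (3*A+5) ≤ (ε / (3*A+5)) * (3*A+5) :=
            mul_le_mul_of_nonneg_right hm (by linarith)
        _ = ε := by field_simp
    clear_value A δ
    obtain ⟨x, hxmem, hxd⟩ := Metric.mem_closure_iff.mp hα δ hδpos
    obtain ⟨k, c, t, hc, ht, hxeq⟩ := hxmem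
    choose s hsS hst using ht
    have hx1 : ∀ j, x.1 j = ∑ i, c i * ((s i).1 j : ℝ) := by
      intro j
      rw [hxeq, Prod.fst_sum, Finset.sum_apply]
      apply Finset.sum_congr rfl
      intro i _
      rw [← hst i]
      simp [latticeEmbed]
    have hx2 : x.2 = ∑ i, c i * ((s i).2 : ℝ) := by
      rw [hxeq, Prod.snd_sum]
      apply Finset.sum_congr rfl
      intro i _
      rw [← hst i]
      simp [latticeEmbed]
    -- distance components
    rw [Prod.dist_eq] at hxd
    have hfst : dist α x.1 < δ := lt_of_le_of_lt (le_max_left _ _) hxd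
    have hsnd : |1 - x.2| < δ := by
      have h := lt_of_le_of_lt (le_max_right _ _) hxd
      rwa [Real.dist_eq] at h
    have hd1 : ∀ j, |α j - x.1 j| < δ := by
      intro j
      have h := dist_le_pi_dist α x.1 j
      rw [Real.dist_eq] at h
      linarith
    -- the constant C
    set C : ℝ := ∑ i, ‖t i‖ with hC
    have hCnn : 0 ≤ C := Finset.sum_nonneg fun i _ => norm_nonneg _
    have hv1 : ∀ i j, |((s i).1 j : ℝ)| ≤ ‖t i‖ := by
      intro i j
      rw [← hst i]
      calc |((s i).1 j : ℝ)| = ‖(latticeEmbed (s i)).1 j‖ := (Real.norm_eq_abs _).symm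
        _ ≤ ‖(latticeEmbed (s i)).1‖ := norm_le_pi_norm _ j
        _ ≤ ‖latticeEmbed (s i)‖ := norm_fst_le _
    have hv2 : ∀ i, |((s i).2 : ℝ)| ≤ ‖t i‖ := by
      intro i
      rw [← hst i]
      calc |((s i).2 : ℝ)| = ‖(latticeEmbed (s i)).2‖ := (Real.norm_eq_abs _).symm
        _ ≤ ‖latticeEmbed (s i)‖ := norm_snd_le _
    -- choose N
    set N : ℕ := ⌈C / δ⌉₊ + 1 with hNdef
    have hNpos : 0 < (N:ℝ) := by positivity
    have hCN : C < δ * N := by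
      have h1 : C / δ < (N:ℝ) := by
        calc C/δ ≤ (⌈C/δ⌉₊ : ℝ) := Nat.le_ceil _
          _ < N := by exact_mod_cast Nat.lt_succ_self _
      calc C = (C/δ) * δ := by field_simp
        _ < N * δ := mul_lt_mul_of_pos_right h1 hδpos
        _ = δ * N := mul_comm _ _
    clear_value C N
    set p : Fin k → ℕ := fun i => ⌈c i * N⌉₊ with hpdef
    have hpb : ∀ i, |(p i : ℝ)/N - c i| ≤ 1/N := by
      intro i
      have h1 : c i * N ≤ (p i : ℝ) := Nat.le_ceil _
      have h2 : (p i:ℝ) < c i * N + 1 := by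
        have := Nat.ceil_lt_add_one (mul_nonneg (hc i) hNpos.le)
        exact_mod_cast this
      have hl : c i ≤ (p i:ℝ)/N := (le_div_iff₀ hNpos).mpr h1
      have hNN : (1/(N:ℝ)) * (N:ℝ) = 1 := by
        rw [one_div, inv_mul_cancel₀ (ne_of_gt hNpos)]
      have hup : (p i:ℝ)/N - c i ≤ 1/N := by
        rw [sub_le_iff_le_add, div_le_iff₀ hNpos]
        have e : (1/(N:ℝ) + c i) * N = 1/(N:ℝ) * N + c i * N := by ring
        rw [e, hNN]
        linarith
      have h1N : (0:ℝ) < 1/N := by positivity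
      rw [abs_le]
      exact ⟨by linarith, hup⟩
    set T := ∑ i, p i • s i with hTdef
    have hT1Z : ∀ j, T.1 j = ∑ i, (p i : ℤ) * ((s i).1 j) := by
      intro j
      rw [hTdef, Prod.fst_sum, Finset.sum_apply]
      apply Finset.sum_congr rfl
      intro i _
      show (p i • s i).1 j = _
      simp [nsmul_eq_mul]
    have hT1R : ∀ j, ((T.1 j : ℤ) : ℝ) = ∑ i, (p i : ℝ) * ((s i).1 j : ℝ) := by
      intro j
      rw [hT1Z j]
      push_cast
      rfl
    have hT2Z : T.2 = ∑ i, (p i : ℤ) * ((s i).2) := by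
      rw [hTdef, Prod.snd_sum]
      apply Finset.sum_congr rfl
      intro i _
      show (p i • s i).2 = _
      simp [nsmul_eq_mul]
    have hT2R : ((T.2 : ℤ) : ℝ) = ∑ i, (p i : ℝ) * ((s i).2 : ℝ) := by
      rw [hT2Z]
      push_cast
      rfl
    have hpsum : 0 < ∑ i, p i := by
      by_contra h
      have h0 : ∑ i, p i = 0 := by omega
      have hall : ∀ i, p i = 0 := fun i => (Finset.sum_eq_zero_iff.mp h0) i (Finset.mem_univ i)
      have hc0 : ∀ i, c i = 0 := by
        intro i
        have h1 : c i * N ≤ 0 := Nat.ceil_eq_zero.mp (hall i)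
        nlinarith [hc i, hNpos]
      have hx20 : x.2 = 0 := by
        rw [hx2]
        exact Finset.sum_eq_zero fun i _ => by rw [hc0 i, zero_mul]
      rw [hx20] at hsnd
      rw [show |(1:ℝ) - 0| = 1 by norm_num] at hsnd
      linarith [hδ8]
    have hTS : T ∈ S := hTdef ▸ aux_sum_mem hsemi k s p hsS hpsum
    clear_value T
    have hb1 : ∀ j, |((T.1 j : ℤ):ℝ)/N - x.1 j| < δ := by
      intro j
      have heq : ((T.1 j : ℤ):ℝ)/N = ∑ i, ((p i:ℝ)/N) * ((s i).1 j : ℝ) := by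
        rw [hT1R j, Finset.sum_div]
        exact Finset.sum_congr rfl fun i _ => by ring
      rw [heq, hx1 j]
      calc |∑ i, ((p i:ℝ)/N) * ((s i).1 j : ℝ) - ∑ i, c i * ((s i).1 j : ℝ)|
          ≤ (1/N) * ∑ i, |((s i).1 j : ℝ)| := aux_abs_sum _ _ _ _ hpb
        _ ≤ (1/N) * C := by
            rw [hC]
            apply mul_le_mul_of_nonneg_left _ (by positivity)
            exact Finset.sum_le_sum fun i _ => hv1 i j
        _ < δ := by
            rw [one_div, inv_mul_eq_div, div_lt_iff₀ hNpos]
            linarith [hCN]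
    have hb2 : |((T.2 : ℤ):ℝ)/N - x.2| < δ := by
      have heq : ((T.2 : ℤ):ℝ)/N = ∑ i, ((p i:ℝ)/N) * ((s i).2 : ℝ) := by
        rw [hT2R, Finset.sum_div]
        exact Finset.sum_congr rfl fun i _ => by ring
      rw [heq, hx2]
      calc |∑ i, ((p i:ℝ)/N) * ((s i).2 : ℝ) - ∑ i, c i * ((s i).2 : ℝ)|
          ≤ (1/N) * ∑ i, |((s i).2 : ℝ)| := aux_abs_sum _ _ _ _ hpb
        _ ≤ (1/N) * C := by
            rw [hC]
            apply mul_le_mul_of_nonneg_left _ (by positivity)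
            exact Finset.sum_le_sum fun i _ => hv2 i
        _ < δ := by
            rw [one_div, inv_mul_eq_div, div_lt_iff₀ hNpos]
            linarith [hCN]
    clear_value p
    set Mz : ℤ := T.2 with hMzdef
    have hMN : |(Mz:ℝ)/N - 1| < 2*δ := by
      calc |(Mz:ℝ)/N - 1| ≤ |(Mz:ℝ)/N - x.2| + |x.2 - 1| := abs_sub_le _ _ _
        _ < δ + δ := by
            have := abs_sub_comm (1:ℝ) x.2
            apply add_lt_add hb2
            rw [abs_sub_comm]
            exact hsnd
        _ = 2*δ := by ring
    have habs := abs_lt.mp hMN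
    have hlow : (3/4:ℝ) ≤ (Mz:ℝ)/N := by
      have : 2*δ ≤ 1/4 := by linarith [hδ8]
      linarith [habs.1]
    have hhighb : (Mz:ℝ)/N ≤ 5/4 := by
      have : 2*δ ≤ 1/4 := by linarith [hδ8]
      linarith [habs.2]
    have hMlow : (3/4:ℝ) * N ≤ (Mz:ℝ) := (le_div_iff₀ hNpos).mp hlow
    have hMpos : 0 < (Mz:ℝ) := by linarith
    have hMZpos : 0 < Mz := by exact_mod_cast hMpos
    set kk : ℕ := Mz.toNat with hkkdef
    have hkk : (kk:ℤ) = Mz := Int.toNat_of_nonneg hMZpos.le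
    have hkk1 : 1 ≤ kk := by omega
    set γ : Fin n → ℝ := fun j => ((T.1 j : ℤ):ℝ)/(Mz:ℝ) with hγdef
    have hmem : γ ∈ ⋃ k : ℕ, ⋃ (_ : 1 ≤ k), Spow S k := by
      simp only [mem_iUnion]
      refine ⟨kk, hkk1, T.1, ?_, ?_⟩
      · intro j
        have hcast : ((kk:ℕ):ℝ) = (Mz:ℝ) := by exact_mod_cast hkk
        rw [hγdef, hcast]
        rw [mul_comm, div_mul_cancel₀ _ (ne_of_gt hMpos)]
      · rw [hkk, hMzdef]
        simpa using hTS
    refine ⟨γ, hmem, ?_⟩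
    rw [dist_pi_lt_iff hε]
    intro j
    rw [Real.dist_eq]
    set u : ℝ := ((T.1 j : ℤ):ℝ)/N with hudef
    have haj : |α j| ≤ A := by
      simpa [hA, Real.norm_eq_abs] using norm_le_pi_norm α j
    have h1 := hd1 j
    have h2 : |u - x.1 j| < δ := hb1 j
    have hu : |u| ≤ A + 2*δ := by
      have t1 : |u| - |x.1 j| ≤ |u - x.1 j| := abs_sub_abs_le_abs_sub _ _
      have t2 : |x.1 j| - |α j| ≤ |x.1 j - α j| := abs_sub_abs_le_abs_sub _ _
      rw [abs_sub_comm] at t2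
      linarith
    have hγu : γ j = u * ((N:ℝ)/(Mz:ℝ)) := by
      rw [hγdef, hudef]
      field_simp
    have hNM : |1 - (N:ℝ)/(Mz:ℝ)| ≤ 3*δ := by
      have hNMpos : 0 < (N:ℝ)/(Mz:ℝ) := by positivity
      have hNMle : (N:ℝ)/(Mz:ℝ) ≤ 4/3 := by
        rw [div_le_iff₀ hMpos]
        linarith
      have hprod : (1 - (N:ℝ)/(Mz:ℝ)) = ((Mz:ℝ)/N - 1) * ((N:ℝ)/(Mz:ℝ)) := by
        field_simp
      rw [hprod, abs_mul, abs_of_pos hNMpos]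
      calc |(Mz:ℝ)/N - 1| * ((N:ℝ)/(Mz:ℝ)) ≤ (2*δ) * (4/3) := by
            apply mul_le_mul hMN.le hNMle hNMpos.le (by linarith)
        _ ≤ 3*δ := by linarith
    have h3 : |u - γ j| ≤ (A + 2*δ) * (3*δ) := by
      have : u - γ j = u * (1 - (N:ℝ)/(Mz:ℝ)) := by rw [hγu]; ring
      rw [this, abs_mul]
      exact mul_le_mul hu hNM (abs_nonneg _) (by linarith)
    have tri1 : |α j - γ j| ≤ |α j - x.1 j| + |x.1 j - γ j| := abs_sub_le _ _ _
    have tri2 : |x.1 j - γ j| ≤ |x.1 j - u| + |u - γ j| := abs_sub_le _ _ _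
    have h2' : |x.1 j - u| < δ := by rw [abs_sub_comm]; exact h2
    nlinarith [hδ8, hδpos, hδε, hApos]
  · apply closure_minimal _ hclosed
    intro α hα
    simp only [mem_iUnion] at hα
    obtain ⟨k, hk, β, hβ, hβS⟩ := hα
    rw [hok, mem_setOf_eq]
    apply subset_closure
    have hk0 : (k:ℝ) ≠ 0 := by positivity
    refine ⟨1, fun _ => (k:ℝ)⁻¹, fun _ => latticeEmbed (β, (k:ℤ)),
      fun _ => by positivity, fun _ => ⟨(β, (k:ℤ)), hβS, rfl⟩, ?_⟩
    rw [Fin.sum_univ_one]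
    have : ((k:ℝ))⁻¹ • latticeEmbed (β, (k:ℤ)) = ((α, (1:ℝ)) : (Fin n → ℝ) × ℝ) := by
      apply Prod.ext
      · funext j
        show (k:ℝ)⁻¹ * ((β j : ℤ) : ℝ) = α j
        rw [show (((β j : ℤ)):ℝ) = ((β j : ℝ)) from rfl, hβ j]
        field_simp
      · show (k:ℝ)⁻¹ * (((k:ℤ)):ℝ) = 1
        push_cast
        field_simp
    rw [this]
  done
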